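/- Let (C, P) → (B, N) be a homomorphism of log rings such that C → B is surjective with kernel I satisfying I² = 0, the map P → N is the quotient making the homomorphism strict, and the subgroup 1 + I of C* acts freely on P. Then the map (1 + I) × P → P ×_N P sending (u, p) to (p, u·p) is an isomorphism of monoids (equivalently, a bijection). As a consequence, any morphism between two such (A,M)-extensions of (B,N) by the same I is automatically an isomorphism. -/

import Mathlib

/-- `(C, P, α)` is a log ring: `α` restricts to an isomorphism `α⁻¹(C*) ≅ C*`. -/
def IsLogRing {C P : Type*} [CommRing C] [CommMonoid P] (α : P →* C) : Prop :=
  ∀ u : Cˣ, ∃! p : P, α p = (u : C)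

/-- Strictness of a surjective homomorphism of log rings `(τs, τf) : (C,P,α) → (B,N,β)`:
the induced log structure `τ*(P) = P ⊕_{(τs∘α)⁻¹(B*)} B*` maps isomorphically onto `N`
(expressed via the concrete description of the pushout along a group). -/
def IsStrict {C B P N : Type*} [CommRing C] [CommRing B] [CommMonoid P] [CommMonoid N]
    (α : P →* C) (β : N →* B) (τs : C →+* B) (τf : P →* N) : Prop :=
  (∀ n : N, ∃ (p : P) (ν : N), IsUnit (β ν) ∧ n = τf p * ν) ∧
  (∀ (p₁ p₂ : P) (ν₁ ν₂ : N), IsUnit (β ν₁) → IsUnit (β ν₂) →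
    τf p₁ * ν₁ = τf p₂ * ν₂ →
    ∃ s₁ s₂ : P, IsUnit (τs (α s₁)) ∧ IsUnit (τs (α s₂)) ∧
      p₁ * s₁ = p₂ * s₂ ∧ ν₁ * τf s₁ = ν₂ * τf s₂)

/-- In a log ring, two elements of `P` with the same image, which is a unit, are equal. -/
lemma log_eq {C P : Type*} [CommRing C] [CommMonoid P] {α : P →* C} (hlog : IsLogRing α)
    {p q : P} (h : α p = α q) (hu : IsUnit (α q)) : p = q := by
  obtain ⟨r, _, huniq⟩ := hlog hu.unit
  rw [huniq p (h.trans hu.unit_spec.symm), huniq q hu.unit_spec.symm]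

/-- In a log ring, elements of `P` mapping to units are invertible. -/
lemma log_inv {C P : Type*} [CommRing C] [CommMonoid P] {α : P →* C} (hlog : IsLogRing α)
    {p : P} (hu : IsUnit (α p)) : ∃ q, p * q = 1 := by
  obtain ⟨q, hq, -⟩ := hlog hu.unit⁻¹
  refine ⟨q, log_eq hlog ?_ (by simp)⟩
  have h2 := hu.unit.mul_inv
  rw [hu.unit_spec] at h2
  rw [map_mul, hq, map_one, h2]

/-- Units lift along a surjection with square-zero kernel. -/
lemma isUnit_lift {C B : Type*} [CommRing C] [CommRing B] (τs : C →+* B)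
    (hτs : Function.Surjective τs) (hker : (RingHom.ker τs) ^ 2 = ⊥)
    {c : C} (h : IsUnit (τs c)) : IsUnit c := by
  obtain ⟨d, hd⟩ := hτs ((h.unit⁻¹ : Bˣ) : B)
  have hmem : c * d - 1 ∈ RingHom.ker τs := by
    have h2 := h.unit.mul_inv
    rw [h.unit_spec] at h2
    rw [RingHom.mem_ker, map_sub, map_mul, hd, map_one, h2, sub_self]
  have hsq : (c * d - 1) * (c * d - 1) = 0 := by
    have : (c * d - 1) * (c * d - 1) ∈ (RingHom.ker τs) ^ 2 := by
      rw [pow_two]; exact Ideal.mul_mem_mul hmem hmem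
    rwa [hker, Ideal.mem_bot] at this
  exact IsUnit.of_mul_eq_one (a := c) (d * (2 - c * d)) (by linear_combination -hsq)

/-- Part 1 of the statement, as a standalone lemma so it can be applied to both extensions. -/
lemma part_one {C B P N : Type*} [CommRing C] [CommRing B] [CommMonoid P] [CommMonoid N]
    (α : P →* C) (β : N →* B) (hlogC : IsLogRing α) (hlogB : IsLogRing β)
    (τs : C →+* B) (hτs : Function.Surjective τs)
    (hker : (RingHom.ker τs) ^ 2 = ⊥)
    (τf : P →* N) (hcomm : ∀ p : P, β (τf p) = τs (α p))
    (hstrict : IsStrict α β τs τf)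
    (hfree : ∀ (u : Cˣ) (q : P), α q = (u : C) → τs (u : C) = 1 →
      (∃ p : P, q * p = p) → (u : C) = 1) :
    ∀ p₁ p₂ : P, τf p₁ = τf p₂ ↔
      ∃! q : P, (IsUnit (α q) ∧ τs (α q) = 1) ∧ q * p₁ = p₂ := by
  intro p₁ p₂
  constructor
  · intro h
    -- existence
    obtain ⟨s₁, s₂, hu₁, hu₂, hps, hνs⟩ := hstrict.2 p₁ p₂ 1 1 (by simp)
      (by simp) (by rw [mul_one, mul_one, h])
    have hss : τf s₁ = τf s₂ := by simpa using hνs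
    have αu₁ : IsUnit (α s₁) := isUnit_lift τs hτs hker hu₁
    have αu₂ : IsUnit (α s₂) := isUnit_lift τs hτs hker hu₂
    obtain ⟨t, ht⟩ := log_inv hlogC αu₂
    have hαt : α s₂ * α t = 1 := by rw [← map_mul, ht, map_one]
    have htu : IsUnit (α t) := IsUnit.of_mul_eq_one _ (by rw [mul_comm]; exact hαt)
    have hτt : τs (α s₂) * τs (α t) = 1 := by rw [← map_mul, hαt, map_one]
    have hkey : ∀ q : P, (IsUnit (α q) ∧ τs (α q) = 1) ∧ q * p₁ = p₂ → q = s₁ * t := by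
      -- uniqueness helper: any valid q equals s₁ * t
      intro q ⟨⟨hqu, hq1⟩, hqp⟩
      have hq'u : IsUnit (α (s₁ * t)) := by rw [map_mul]; exact αu₁.mul htu
      have hq'1 : τs (α (s₁ * t)) = 1 := by
        have : τs (α s₁) = τs (α s₂) := by rw [← hcomm, ← hcomm, hss]
        simp only [map_mul]
        rw [this, hτt]
      have hq'p : (s₁ * t) * p₁ = p₂ := by
        have e : s₁ * t * p₁ = (p₁ * s₁) * t := by ac_rfl
        rw [e, hps, mul_assoc, ht, mul_one]
      -- now q and s₁ * t both work; use freeness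
      obtain ⟨t', ht'⟩ := log_inv hlogC hq'u
      have ht'u : IsUnit (α t') := IsUnit.of_mul_eq_one (α (s₁ * t))
        (by rw [← map_mul, mul_comm, ht', map_one])
      have hru : IsUnit (α (q * t')) := by rw [map_mul]; exact hqu.mul ht'u
      have hrp : (q * t') * p₁ = p₁ := by
        have e1 : (q * t') * p₁ = t' * (q * p₁) := by ac_rfl
        rw [e1, hqp, ← hq'p]
        have e2 : t' * (s₁ * t * p₁) = ((s₁ * t) * t') * p₁ := by ac_rfl
        rw [e2, ht', one_mul]
      have ht'1 : τs (α t') = 1 := by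
        have : τs (α (s₁ * t)) * τs (α t') = 1 := by
          rw [← map_mul, ← map_mul, ht', map_one, map_one]
        rwa [hq'1, one_mul] at this
      have hr1 : τs ((hru.unit : Cˣ) : C) = 1 := by
        rw [hru.unit_spec]
        simp only [map_mul]
        rw [hq1, ht'1, one_mul]
      have := hfree hru.unit (q * t') hru.unit_spec.symm hr1 ⟨p₁, hrp⟩
      have hqt1 : α (q * t') = 1 := by rw [← hru.unit_spec, this]
      have : q * t' = 1 := log_eq hlogC (by rw [hqt1, map_one]) (by simp)
      calc q = q * ((s₁ * t) * t') := by rw [ht', mul_one]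
        _ = (s₁ * t) * (q * t') := by ac_rfl
        _ = s₁ * t := by rw [this, mul_one]
    refine ⟨s₁ * t, ?_, hkey⟩
    · refine ⟨⟨?_, ?_⟩, ?_⟩
      · rw [map_mul]; exact αu₁.mul htu
      · have : τs (α s₁) = τs (α s₂) := by rw [← hcomm, ← hcomm, hss]
        simp only [map_mul]
        rw [this, hτt]
      · have e : s₁ * t * p₁ = (p₁ * s₁) * t := by ac_rfl
        rw [e, hps, mul_assoc, ht, mul_one]
  · rintro ⟨q, ⟨⟨hqu, hq1⟩, hqp⟩, -⟩
    have hq : τf q = 1 := by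
      refine log_eq hlogB ?_ (by simp)
      rw [hcomm, hq1, map_one]
    rw [← hqp, map_mul, hq, one_mul]

/-- For an extension `τ : (C,P) → (B,N)` of log rings (strict surjection
with square-zero kernel `I` and `1 + I` acting freely on `P`), the map
`(1 + I) × P → P ×_N P, (u, p) ↦ (p, u·p)` is a bijection; expressed elementwise:
`τf p₁ = τf p₂` iff there is a unique `q ∈ P` lying over a unit of `1 + I` with
`q·p₁ = p₂`. As a consequence, any morphism between two such extensions of `(B,N)` by
the same `I` is automatically an isomorphism. -/
theorem stmt_10 {C B P N : Type*} [CommRing C] [CommRing B] [CommMonoid P] [CommMonoid N]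
    (α : P →* C) (β : N →* B) (hlogC : IsLogRing α) (hlogB : IsLogRing β)
    (τs : C →+* B) (hτs : Function.Surjective τs)
    (hker : (RingHom.ker τs) ^ 2 = ⊥)
    (τf : P →* N) (hcomm : ∀ p : P, β (τf p) = τs (α p))
    (hstrict : IsStrict α β τs τf)
    (hfree : ∀ (u : Cˣ) (q : P), α q = (u : C) → τs (u : C) = 1 →
      (∃ p : P, q * p = p) → (u : C) = 1) :
    (∀ p₁ p₂ : P, τf p₁ = τf p₂ ↔
      ∃! q : P, (IsUnit (α q) ∧ τs (α q) = 1) ∧ q * p₁ = p₂) ∧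
    (∀ (C' P' : Type*) [CommRing C'] [CommMonoid P'],
      ∀ (α' : P' →* C') (_ : IsLogRing α')
        (τs' : C' →+* B) (_ : Function.Surjective τs')
        (_ : (RingHom.ker τs') ^ 2 = ⊥)
        (τf' : P' →* N) (_ : ∀ p : P', β (τf' p) = τs' (α' p))
        (_ : IsStrict α' β τs' τf')
        (_ : ∀ (u : C'ˣ) (q : P'), α' q = (u : C') → τs' (u : C') = 1 →
          (∃ p : P', q * p = p) → (u : C') = 1)
        (hs : C →+* C') (hf : P →* P'),
        τs'.comp hs = τs → τf'.comp hf = τf →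
        (∀ p : P, α' (hf p) = hs (α p)) →
        Set.BijOn hs (RingHom.ker τs : Set C) (RingHom.ker τs' : Set C') →
        Function.Bijective hf ∧ Function.Bijective hs) := by
  have h1 := part_one α β hlogC hlogB τs hτs hker τf hcomm hstrict hfree
  refine ⟨h1, ?_⟩
  intro C' P' _ _ α' hlogC' τs' hτs' hker' τf' hcomm' hstrict' hfree' hs hf hcs hcf hα hBij
  have hcs' : ∀ c : C, τs' (hs c) = τs c := fun c => DFunLike.congr_fun hcs c
  have hcf' : ∀ p : P, τf' (hf p) = τf p := fun p => DFunLike.congr_fun hcf p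
  have h1' := part_one α' β hlogC' hlogB τs' hτs' hker' τf' hcomm' hstrict' hfree'
  -- hs is injective
  have hsinj : Function.Injective hs := by
    intro a b hab
    have hmem : a - b ∈ RingHom.ker τs := by
      rw [RingHom.mem_ker, ← hcs', map_sub, hab, sub_self, map_zero]
    have h0 : (0 : C) ∈ RingHom.ker τs := by simp [RingHom.mem_ker]
    have : a - b = 0 := hBij.injOn hmem h0 (by rw [map_sub, hab, sub_self, map_zero])
    exact sub_eq_zero.mp this
  -- hs is surjective
  have hssurj : Function.Surjective hs := by
    intro c'
    obtain ⟨c, hc⟩ := hτs (τs' c')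
    have hmem : c' - hs c ∈ RingHom.ker τs' := by
      rw [RingHom.mem_ker, map_sub, hcs', hc, sub_self]
    obtain ⟨i, _, hi⟩ := hBij.surjOn hmem
    exact ⟨c + i, by rw [map_add, hi]; ring⟩
  -- hf is injective
  have hfinj : Function.Injective hf := by
    intro p₁ p₂ hp
    have hτ : τf p₁ = τf p₂ := by rw [← hcf', ← hcf', hp]
    obtain ⟨q, ⟨⟨hqu, hq1⟩, hqp⟩, -⟩ := (h1 p₁ p₂).mp hτ
    obtain ⟨q₀, hq₀, huniq⟩ := (h1' (hf p₁) (hf p₁)).mp rfl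
    have e1 : hf q = q₀ := huniq (hf q)
      ⟨⟨by rw [hα]; exact hqu.map hs, by rw [hα, hcs', hq1]⟩,
        by rw [← map_mul, hqp, ← hp]⟩
    have e2 : (1 : P') = q₀ := huniq 1 ⟨⟨by simp, by simp⟩, one_mul _⟩
    have hfq1 : hf q = 1 := e1.trans e2.symm
    have hαq : α q = 1 := by
      apply hsinj
      rw [← hα, hfq1, map_one, map_one]
    have hq1' : q = 1 := log_eq hlogC (by rw [hαq, map_one]) (by simp)
    rw [← hqp, hq1', one_mul]
  -- hf is surjective
  have hfsurj : Function.Surjective hf := by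
    intro p'
    obtain ⟨p, ν, hν, hn⟩ := hstrict.1 (τf' p')
    -- lift ν to an element r of P with τf r = ν
    obtain ⟨c, hc⟩ := hτs (β ν)
    have hcu : IsUnit c := isUnit_lift τs hτs hker (by rw [hc]; exact hν)
    obtain ⟨r, hr, -⟩ := hlogC hcu.unit
    have hrν : τf r = ν := by
      refine log_eq hlogB ?_ hν
      rw [hcomm, hr, hcu.unit_spec, hc]
    have hτpr : τf' (hf (p * r)) = τf' p' := by
      rw [hcf', map_mul, hrν, ← hn]
    obtain ⟨q', ⟨⟨hq'u, hq'1⟩, hq'p⟩, -⟩ := (h1' (hf (p * r)) p').mp hτpr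
    -- lift q' to P
    obtain ⟨d, hd⟩ := hssurj (α' q')
    have hdu : IsUnit d := by
      obtain ⟨e', he'⟩ := hssurj ((hq'u.unit⁻¹ : C'ˣ) : C')
      refine IsUnit.of_mul_eq_one (a := d) e' (hsinj ?_)
      have h2 := hq'u.unit.mul_inv
      rw [hq'u.unit_spec] at h2
      rw [map_mul, hd, he', map_one, h2]
    obtain ⟨q, hq, -⟩ := hlogC hdu.unit
    have hfq : hf q = q' := by
      refine log_eq hlogC' ?_ hq'u
      rw [hα, hq, hdu.unit_spec, hd]
    exact ⟨q * (p * r), by rw [map_mul, hfq, hq'p]⟩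
  exact ⟨⟨hfinj, hfsurj⟩, ⟨hsinj, hssurj⟩⟩
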